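/- arXiv:2307.01339 — 2 statements merged into one kernel-verified Lean document; each statement's English description precedes it below -/
import Mathlib

section
/- The second Abdelqader–Lake syzygy holds for the Kerr–(anti-)de Sitter black hole: for all real a, m, Λ and all (r, θ) with r² + a²cos²θ > 0, one has I₇ = (6/5)(I₁I₄ + I₂I₃). -/
noncomputable section

namespace KerrAdS

/-- `ρ² = r² + a² cos²θ` in Boyer–Lindquist coordinates. -/
def rho2 (a r θ : ℝ) : ℝ := r ^ 2 + a ^ 2 * Real.cos θ ^ 2

/-- The complex combination `I₁ + i I₂ = 48 m² (r − i a cos θ)⁶ / ρ¹²`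
(the orientation convention `I₁ + iI₂ = 48 Ψ₂²` with `Ψ₂ = −m/(r + i a cos θ)³`). -/
def Ic (a m r θ : ℝ) : ℂ :=
  48 * (m : ℂ) ^ 2 * ((r : ℂ) - Complex.I * ((a * Real.cos θ : ℝ) : ℂ)) ^ 6 /
    ((rho2 a r θ : ℝ) : ℂ) ^ 6

/-- The Weyl invariant `I₁ = C_{αβγδ} C^{αβγδ}` of the Kerr–(anti-)de Sitter black hole. -/
def I1 (a m r θ : ℝ) : ℝ := (Ic a m r θ).re

/-- The Chern–Pontryagin invariant `I₂ = C*_{αβγδ} C^{αβγδ}`. -/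
def I2 (a m r θ : ℝ) : ℝ := (Ic a m r θ).im

/-- `Δ_r = (1 − Λr²/3)(r² + a²) − 2mr`. -/
def Δr (a m Λ r : ℝ) : ℝ := (1 - Λ * r ^ 2 / 3) * (r ^ 2 + a ^ 2) - 2 * m * r

/-- `Δ_θ = 1 + (a²Λ/3) cos²θ`. -/
def Δθ (a Λ θ : ℝ) : ℝ := 1 + a ^ 2 * Λ / 3 * Real.cos θ ^ 2

/-- The gradient invariant `I₅ = ∇_μ I₁ ∇^μ I₁
  = (Δ_r/ρ²)(∂_r I₁)² + (Δ_θ/ρ²)(∂_θ I₁)²`. -/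
def I5 (a m Λ r θ : ℝ) : ℝ :=
  Δr a m Λ r / rho2 a r θ * (deriv (fun r' => I1 a m r' θ) r) ^ 2 +
    Δθ a Λ θ / rho2 a r θ * (deriv (fun θ' => I1 a m r θ') θ) ^ 2

/-- The gradient invariant `I₆ = ∇_μ I₂ ∇^μ I₂
  = (Δ_r/ρ²)(∂_r I₂)² + (Δ_θ/ρ²)(∂_θ I₂)²`. -/
def I6 (a m Λ r θ : ℝ) : ℝ :=
  Δr a m Λ r / rho2 a r θ * (deriv (fun r' => I2 a m r' θ) r) ^ 2 +
    Δθ a Λ θ / rho2 a r θ * (deriv (fun θ' => I2 a m r θ') θ) ^ 2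

/-- The gradient invariant `I₇ = ∇_μ I₁ ∇^μ I₂
  = (Δ_r/ρ²)(∂_r I₁)(∂_r I₂) + (Δ_θ/ρ²)(∂_θ I₁)(∂_θ I₂)`. -/
def I7 (a m Λ r θ : ℝ) : ℝ :=
  Δr a m Λ r / rho2 a r θ *
      (deriv (fun r' => I1 a m r' θ) r) * (deriv (fun r' => I2 a m r' θ) r) +
    Δθ a Λ θ / rho2 a r θ *
      (deriv (fun θ' => I1 a m r θ') θ) * (deriv (fun θ' => I2 a m r θ') θ)

/-- The ergosurface polynomial
`E = Λa⁴c⁴ − Λa⁴c² − Λa²r² − Λr⁴ + 3a²c² − 6mr + 3r²`, `c = cos θ`. -/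
def E (a m Λ r θ : ℝ) : ℝ :=
  Λ * a ^ 4 * Real.cos θ ^ 4 - Λ * a ^ 4 * Real.cos θ ^ 2 - Λ * a ^ 2 * r ^ 2 - Λ * r ^ 4 +
    3 * a ^ 2 * Real.cos θ ^ 2 - 6 * m * r + 3 * r ^ 2

/-- The differential Weyl invariant `I₃ = ∇_μ C_{αβγδ} ∇^μ C^{αβγδ}`
(explicit closed form). -/
def I3 (a m Λ r θ : ℝ) : ℝ :=
  240 * m ^ 2 / rho2 a r θ ^ 9 *
    (a ^ 4 * Real.cos θ ^ 4 - 4 * a ^ 3 * Real.cos θ ^ 3 * r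
      - 6 * a ^ 2 * Real.cos θ ^ 2 * r ^ 2 + 4 * a * Real.cos θ * r ^ 3 + r ^ 4) *
    (a ^ 4 * Real.cos θ ^ 4 + 4 * a ^ 3 * Real.cos θ ^ 3 * r
      - 6 * a ^ 2 * Real.cos θ ^ 2 * r ^ 2 - 4 * a * Real.cos θ * r ^ 3 + r ^ 4) *
    E a m Λ r θ

/-- The mixed differential Weyl invariant `I₄ = ∇_μ C_{αβγδ} ∇^μ C*^{αβγδ}`
(explicit closed form). -/
def I4 (a m Λ r θ : ℝ) : ℝ :=
  1920 * a * Real.cos θ * r * m ^ 2 / rho2 a r θ ^ 9 * E a m Λ r θ *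
    (a ^ 2 * Real.cos θ ^ 2 - 2 * a * Real.cos θ * r - r ^ 2) *
    (a ^ 2 * Real.cos θ ^ 2 + 2 * a * Real.cos θ * r - r ^ 2) *
    (a ^ 2 * Real.cos θ ^ 2 - r ^ 2)

end KerrAdS

namespace KerrAdS

set_option maxHeartbeats 4000000

lemma re6 (x y : ℝ) : (((x:ℂ) - Complex.I * y)^6).re
    = x^6 - 15*x^4*y^2 + 15*x^2*y^4 - y^6 := by
  simp [pow_succ, Complex.mul_re, Complex.mul_im]; ring

lemma im6 (x y : ℝ) : (((x:ℂ) - Complex.I * y)^6).im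
    = -6*x^5*y + 20*x^3*y^3 - 6*x*y^5 := by
  simp [pow_succ, Complex.mul_re, Complex.mul_im]; ring

lemma I1_eq (a m r θ : ℝ) :
    I1 a m r θ = 48*m^2*(r^6 - 15*a^2*Real.cos θ^2*r^4 + 15*a^4*Real.cos θ^4*r^2
      - a^6*Real.cos θ^6) / (r^2 + a^2*Real.cos θ^2)^6 := by
  unfold I1 Ic rho2
  rw [show (((r ^ 2 + a ^ 2 * Real.cos θ ^ 2 : ℝ)) : ℂ)^6
      = (((r ^ 2 + a ^ 2 * Real.cos θ ^ 2)^6 : ℝ) : ℂ) by push_cast; ring,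
    Complex.div_ofReal_re,
    show 48 * (m : ℂ) ^ 2 * ((r : ℂ) - Complex.I * ((a * Real.cos θ : ℝ) : ℂ)) ^ 6
      = (((48*m^2 : ℝ)) : ℂ) * ((r : ℂ) - Complex.I * ((a * Real.cos θ : ℝ) : ℂ)) ^ 6 by
        push_cast; ring,
    Complex.re_ofReal_mul, re6]
  ring

lemma I2_eq (a m r θ : ℝ) :
    I2 a m r θ = 48*m^2*(-6*a*Real.cos θ*r^5 + 20*a^3*Real.cos θ^3*r^3
      - 6*a^5*Real.cos θ^5*r) / (r^2 + a^2*Real.cos θ^2)^6 := by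
  unfold I2 Ic rho2
  rw [show (((r ^ 2 + a ^ 2 * Real.cos θ ^ 2 : ℝ)) : ℂ)^6
      = (((r ^ 2 + a ^ 2 * Real.cos θ ^ 2)^6 : ℝ) : ℂ) by push_cast; ring,
    Complex.div_ofReal_im,
    show 48 * (m : ℂ) ^ 2 * ((r : ℂ) - Complex.I * ((a * Real.cos θ : ℝ) : ℂ)) ^ 6
      = (((48*m^2 : ℝ)) : ℂ) * ((r : ℂ) - Complex.I * ((a * Real.cos θ : ℝ) : ℂ)) ^ 6 by
        push_cast; ring,
    Complex.im_ofReal_mul, im6]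
  ring

lemma d1r (a m θ r : ℝ) (h : (r^2 + a^2*Real.cos θ^2) ≠ 0) :
    deriv (fun r' => I1 a m r' θ) r =
      (48*m^2*(6*r^5 - 60*a^2*Real.cos θ^2*r^3 + 30*a^4*Real.cos θ^4*r)
          * (r^2 + a^2*Real.cos θ^2)
        - 48*m^2*(r^6 - 15*a^2*Real.cos θ^2*r^4 + 15*a^4*Real.cos θ^4*r^2
          - a^6*Real.cos θ^6) * (12*r)) / (r^2 + a^2*Real.cos θ^2)^7 := by
  have hD : HasDerivAt (fun x : ℝ => (x^2 + a^2*Real.cos θ^2)^6)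
      (6*(r^2 + a^2*Real.cos θ^2)^(6-1) * ((2:ℕ)*r^(2-1))) r :=
    ((hasDerivAt_pow 2 r).add_const _).pow 6
  have hN := ((((hasDerivAt_pow 6 r).sub ((hasDerivAt_pow 4 r).const_mul
      (15*a^2*Real.cos θ^2))).add ((hasDerivAt_pow 2 r).const_mul
      (15*a^4*Real.cos θ^4))).sub_const (a^6*Real.cos θ^6)).const_mul (48*m^2)
  have hQ := hN.div hD (pow_ne_zero 6 h)
  have hfun : (fun r' => I1 a m r' θ) = fun x => 48*m^2*(x^6 - 15*a^2*Real.cos θ^2*x^4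
      + 15*a^4*Real.cos θ^4*x^2 - a^6*Real.cos θ^6) / (x^2 + a^2*Real.cos θ^2)^6 :=
    funext fun x => I1_eq a m x θ
  rw [hfun]
  erw [hQ.deriv]
  simp only [Pi.add_apply, Pi.sub_apply]
  push_cast
  field_simp
  ring

lemma d2r (a m θ r : ℝ) (h : (r^2 + a^2*Real.cos θ^2) ≠ 0) :
    deriv (fun r' => I2 a m r' θ) r =
      (48*m^2*(-30*a*Real.cos θ*r^4 + 60*a^3*Real.cos θ^3*r^2 - 6*a^5*Real.cos θ^5)
          * (r^2 + a^2*Real.cos θ^2)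
        - 48*m^2*(-6*a*Real.cos θ*r^5 + 20*a^3*Real.cos θ^3*r^3
          - 6*a^5*Real.cos θ^5*r) * (12*r)) / (r^2 + a^2*Real.cos θ^2)^7 := by
  have hD : HasDerivAt (fun x : ℝ => (x^2 + a^2*Real.cos θ^2)^6)
      (6*(r^2 + a^2*Real.cos θ^2)^(6-1) * ((2:ℕ)*r^(2-1))) r :=
    ((hasDerivAt_pow 2 r).add_const _).pow 6
  have hN := ((((hasDerivAt_pow 5 r).const_mul (-6*a*Real.cos θ)).add
      ((hasDerivAt_pow 3 r).const_mul (20*a^3*Real.cos θ^3))).sub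
      ((hasDerivAt_id' (x := r)).const_mul (6*a^5*Real.cos θ^5))).const_mul (48*m^2)
  have hQ := hN.div hD (pow_ne_zero 6 h)
  have hfun : (fun r' => I2 a m r' θ) = fun x => 48*m^2*(-6*a*Real.cos θ*x^5
      + 20*a^3*Real.cos θ^3*x^3 - 6*a^5*Real.cos θ^5*x) / (x^2 + a^2*Real.cos θ^2)^6 :=
    funext fun x => I2_eq a m x θ
  rw [hfun]
  erw [hQ.deriv]
  simp only [Pi.add_apply, Pi.sub_apply]
  push_cast
  field_simp
  ring

lemma d1θ (a m θ r : ℝ) (h : (r^2 + a^2*Real.cos θ^2) ≠ 0) :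
    deriv (fun θ' => I1 a m r θ') θ =
      (48*m^2*(-30*a^2*Real.cos θ*r^4 + 60*a^4*Real.cos θ^3*r^2 - 6*a^6*Real.cos θ^5)
          * (r^2 + a^2*Real.cos θ^2)
        - 48*m^2*(r^6 - 15*a^2*Real.cos θ^2*r^4 + 15*a^4*Real.cos θ^4*r^2
          - a^6*Real.cos θ^6) * (12*a^2*Real.cos θ)) / (r^2 + a^2*Real.cos θ^2)^7
        * (-Real.sin θ) := by
  set X := Real.cos θ with hX
  have hD : HasDerivAt (fun x : ℝ => (r^2 + a^2*x^2)^6)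
      (6*(r^2 + a^2*X^2)^(6-1) * (a^2*((2:ℕ)*X^(2-1)))) X :=
    (((hasDerivAt_pow 2 X).const_mul (a^2)).const_add (r^2)).pow 6
  have hN := (((((hasDerivAt_pow 2 X).const_mul (15*a^2)).mul_const (r^4)).const_sub
      (r^6)).add (((hasDerivAt_pow 4 X).const_mul (15*a^4)).mul_const (r^2))).sub
      ((hasDerivAt_pow 6 X).const_mul (a^6)) |>.const_mul (48*m^2)
  have hQ := (hN.div hD (pow_ne_zero 6 h)).comp θ (Real.hasDerivAt_cos θ)
  have hfun : (fun θ' => I1 a m r θ') = (fun x => 48*m^2*((r^6 - 15*a^2*x^2*r^4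
      + 15*a^4*x^4*r^2) - a^6*x^6) / (r^2 + a^2*x^2)^6) ∘ Real.cos :=
    funext fun t => by
      have := I1_eq a m r t
      simpa [Function.comp] using this
  rw [hfun]
  erw [hQ.deriv]
  simp only [Pi.add_apply, Pi.sub_apply]
  push_cast
  field_simp
  ring

lemma d2θ (a m θ r : ℝ) (h : (r^2 + a^2*Real.cos θ^2) ≠ 0) :
    deriv (fun θ' => I2 a m r θ') θ =
      (48*m^2*(-6*a*r^5 + 60*a^3*Real.cos θ^2*r^3 - 30*a^5*Real.cos θ^4*r)
          * (r^2 + a^2*Real.cos θ^2)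
        - 48*m^2*(-6*a*Real.cos θ*r^5 + 20*a^3*Real.cos θ^3*r^3
          - 6*a^5*Real.cos θ^5*r) * (12*a^2*Real.cos θ)) / (r^2 + a^2*Real.cos θ^2)^7
        * (-Real.sin θ) := by
  set X := Real.cos θ with hX
  have hD : HasDerivAt (fun x : ℝ => (r^2 + a^2*x^2)^6)
      (6*(r^2 + a^2*X^2)^(6-1) * (a^2*((2:ℕ)*X^(2-1)))) X :=
    (((hasDerivAt_pow 2 X).const_mul (a^2)).const_add (r^2)).pow 6
  have hN := ((((hasDerivAt_id' (x := X)).const_mul (-6*a)).mul_const (r^5)).add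
      (((hasDerivAt_pow 3 X).const_mul (20*a^3)).mul_const (r^3))).sub
      (((hasDerivAt_pow 5 X).const_mul (6*a^5)).mul_const r) |>.const_mul (48*m^2)
  have hQ := (hN.div hD (pow_ne_zero 6 h)).comp θ (Real.hasDerivAt_cos θ)
  have hfun : (fun θ' => I2 a m r θ') = (fun x => 48*m^2*((-6*a*x*r^5
      + 20*a^3*x^3*r^3) - 6*a^5*x^5*r) / (r^2 + a^2*x^2)^6) ∘ Real.cos :=
    funext fun t => by
      have := I2_eq a m r t
      simpa [Function.comp] using this
  rw [hfun]
  erw [hQ.deriv]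
  simp only [Pi.add_apply, Pi.sub_apply]
  push_cast
  field_simp
  ring

/-- The second Abdelqader–Lake syzygy
`I₇ = (6/5)(I₁I₄ + I₂I₃)` holds for the Kerr–(anti-)de Sitter black hole. -/
theorem second_syzygy (a m Λ r θ : ℝ) (h : 0 < rho2 a r θ) :
    I7 a m Λ r θ =
      6 / 5 * (I1 a m r θ * I4 a m Λ r θ + I2 a m r θ * I3 a m Λ r θ) := by
  have hρ : r ^ 2 + a ^ 2 * Real.cos θ ^ 2 ≠ 0 := ne_of_gt h
  have hsin : ∀ A B : ℝ,
      (A * -Real.sin θ) * (B * -Real.sin θ) = A * B * (1 - Real.cos θ ^ 2) := by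
    intro A B
    rw [← Real.sin_sq θ]
    ring
  unfold I7
  rw [mul_assoc, mul_assoc, d1r a m θ r hρ, d2r a m θ r hρ, d1θ a m θ r hρ,
    d2θ a m θ r hρ, hsin, I1_eq, I2_eq]
  unfold I3 I4 E Δr Δθ rho2
  field_simp
  ring

end KerrAdS
end
end

section
/- For the Kerr–(anti-)de Sitter black hole, for all m ≠ 0 and all (r, θ) with r² + a²cos²θ > 0, the Abdelqader–Lake invariant Q₂ = (1/27)·(I₅I₆ − I₇²)/(I₁² + I₂²)^{5/2} satisfies the closed-form identity Q₂(r, θ) = −a²sin²θ·((Λ/3)r⁴ + (a²Λ/3 − 1)r² + 2mr − a²)·(1 + (a²Λ/3)cos²θ)/((r² + a²cos²θ)m²). -/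
set_option maxHeartbeats 1000000


noncomputable section

namespace KerrAdS

lemma hasDerivAt_re' {f : ℝ → ℂ} {w : ℂ} {x : ℝ} (hf : HasDerivAt f w x) :
    HasDerivAt (fun x => (f x).re) w.re x := by
  simpa [Function.comp_def] using (Complex.reCLM.hasFDerivAt.comp x hf.hasFDerivAt).hasDerivAt

lemma hasDerivAt_im' {f : ℝ → ℂ} {w : ℂ} {x : ℝ} (hf : HasDerivAt f w x) :
    HasDerivAt (fun x => (f x).im) w.im x := by
  simpa [Function.comp_def] using (Complex.imCLM.hasFDerivAt.comp x hf.hasFDerivAt).hasDerivAt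

/-- the complexified `z = r - i a cos θ` with normalized casts -/
def Zc (a r θ : ℝ) : ℂ := (r : ℂ) - Complex.I * ((a : ℂ) * Complex.cos (θ : ℂ))

section main
variable (a m r θ : ℝ)

lemma hcast' : ((rho2 a r θ : ℝ) : ℂ) = (r:ℂ)^2 + ((a:ℂ) * Complex.cos (θ:ℂ))^2 := by
  simp only [rho2, Complex.ofReal_add, Complex.ofReal_mul, Complex.ofReal_pow,
    Complex.ofReal_cos]
  ring

lemma hRz : ((rho2 a r θ : ℝ) : ℂ) = 2 * (r:ℂ) * Zc a r θ - Zc a r θ ^ 2 := by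
  rw [hcast']; simp only [Zc]
  linear_combination ((a:ℂ) * Complex.cos (θ:ℂ))^2 * Complex.I_sq

lemma hK1 : Complex.I * ((rho2 a r θ : ℝ) : ℂ)
    + 2 * ((a:ℂ) * Complex.cos (θ:ℂ)) * Zc a r θ = Complex.I * Zc a r θ ^ 2 := by
  rw [hcast']; simp only [Zc]
  linear_combination (2*(a:ℂ)*Complex.cos (θ:ℂ)*(r:ℂ)
    - Complex.I*((a:ℂ)*Complex.cos (θ:ℂ))^2) * Complex.I_sq

lemma Ic_eq : Ic a m r θ = 48 * (m:ℂ)^2 * Zc a r θ ^ 6 / ((rho2 a r θ : ℝ) : ℂ)^6 := by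
  simp only [Ic, Zc, Complex.ofReal_mul, Complex.ofReal_cos]

lemma hR0 (h0 : rho2 a r θ ≠ 0) : ((rho2 a r θ : ℝ) : ℂ) ≠ 0 := by exact_mod_cast h0

lemma hz0 (h0 : rho2 a r θ ≠ 0) : Zc a r θ ≠ 0 := by
  intro hz
  apply hR0 a r θ h0
  rw [hRz, hz]; ring

lemma hDr (h0 : rho2 a r θ ≠ 0) : HasDerivAt (fun r' : ℝ => Ic a m r' θ)
    (-(288 * (m:ℂ)^2 * Zc a r θ ^ 7 / ((rho2 a r θ : ℝ) : ℂ)^7)) r := by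
  set K := (a:ℂ) * Complex.cos (θ:ℂ) with hK
  have hden0 : ((r:ℂ)^2 + K^2)^6 ≠ 0 := by
    rw [← hcast']; exact pow_ne_zero _ (hR0 a r θ h0)
  have hF : HasDerivAt (fun w : ℂ => 48*(m:ℂ)^2*(w - Complex.I*K)^6/(w^2+K^2)^6)
      ((48*(m:ℂ)^2*((6:ℕ) * ((r:ℂ) - Complex.I*K)^(6-1) * 1) * ((r:ℂ)^2+K^2)^6
        - 48*(m:ℂ)^2*((r:ℂ) - Complex.I*K)^6 *
          ((6:ℕ) * ((r:ℂ)^2+K^2)^(6-1) * ((2:ℕ) * (r:ℂ)^(2-1) * 1)))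
        / (((r:ℂ)^2+K^2)^6)^2) (r:ℂ) :=
    HasDerivAt.div
      ((((hasDerivAt_id (r:ℂ)).sub_const (Complex.I*K)).pow 6).const_mul (48*(m:ℂ)^2))
      ((((hasDerivAt_id (r:ℂ)).pow 2).add_const (K^2)).pow 6) hden0
  have hF' := hF.comp_ofReal (z := r)
  have hfun : (fun y : ℝ => 48*(m:ℂ)^2*((y:ℂ) - Complex.I*K)^6/(((y:ℂ))^2+K^2)^6)
      = (fun r' : ℝ => Ic a m r' θ) := by
    funext y
    rw [Ic_eq, hcast', Zc]
  rw [hfun] at hF'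
  convert hF' using 1
  rw [← hcast']
  have hR := hR0 a r θ h0
  have hRz' := hRz a r θ
  simp only [Zc, ← hK] at hRz' ⊢
  rw [neg_div', div_eq_div_iff (pow_ne_zero 7 hR) (pow_ne_zero 2 (pow_ne_zero 6 hR))]
  linear_combination (-(288:ℂ) * (m:ℂ)^2 * ((r:ℂ) - Complex.I*K)^5 *
    ((rho2 a r θ : ℝ) : ℂ)^12) * hRz'

lemma hDθ (h0 : rho2 a r θ ≠ 0) : HasDerivAt (fun θ' : ℝ => Ic a m r θ')
    (Complex.I * ((a:ℂ) * Complex.sin (θ:ℂ)) *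
      (288 * (m:ℂ)^2 * Zc a r θ ^ 7 / ((rho2 a r θ : ℝ) : ℂ)^7)) θ := by
  have hden0 : ((r:ℂ)^2 + ((a:ℂ)*Complex.cos (θ:ℂ))^2)^6 ≠ 0 := by
    rw [← hcast']; exact pow_ne_zero _ (hR0 a r θ h0)
  have hcosd : HasDerivAt (fun w : ℂ => (a:ℂ) * Complex.cos w)
      ((a:ℂ) * (-Complex.sin (θ:ℂ))) (θ:ℂ) :=
    (Complex.hasDerivAt_cos (θ:ℂ)).const_mul ((a:ℂ))
  have hF : HasDerivAt
      (fun w : ℂ => 48*(m:ℂ)^2*((r:ℂ) - Complex.I*((a:ℂ)*Complex.cos w))^6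
        / ((r:ℂ)^2+((a:ℂ)*Complex.cos w)^2)^6)
      ((48*(m:ℂ)^2*((6:ℕ) * ((r:ℂ) - Complex.I*((a:ℂ)*Complex.cos (θ:ℂ)))^(6-1)
          * (0 - Complex.I * ((a:ℂ) * (-Complex.sin (θ:ℂ)))))
          * ((r:ℂ)^2+((a:ℂ)*Complex.cos (θ:ℂ))^2)^6
        - 48*(m:ℂ)^2*((r:ℂ) - Complex.I*((a:ℂ)*Complex.cos (θ:ℂ)))^6 *
          ((6:ℕ) * ((r:ℂ)^2+((a:ℂ)*Complex.cos (θ:ℂ))^2)^(6-1)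
            * (0 + (2:ℕ) * ((a:ℂ)*Complex.cos (θ:ℂ))^(2-1) * ((a:ℂ) * (-Complex.sin (θ:ℂ))))))
        / ((((r:ℂ)^2+((a:ℂ)*Complex.cos (θ:ℂ))^2)^6)^2)) (θ:ℂ) :=
    HasDerivAt.div
      ((((hasDerivAt_const (θ:ℂ) (r:ℂ)).sub ((hcosd).const_mul Complex.I)).pow 6).const_mul
        (48*(m:ℂ)^2))
      (((hasDerivAt_const (θ:ℂ) ((r:ℂ)^2)).add ((hcosd).pow 2)).pow 6) hden0
  have hF' := hF.comp_ofReal (z := θ)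
  have hfun : (fun y : ℝ => 48*(m:ℂ)^2*((r:ℂ) - Complex.I*((a:ℂ)*Complex.cos (y:ℂ)))^6
        / ((r:ℂ)^2+((a:ℂ)*Complex.cos (y:ℂ))^2)^6)
      = (fun θ' : ℝ => Ic a m r θ') := by
    funext y
    rw [Ic_eq, hcast', Zc]
  rw [hfun] at hF'
  convert hF' using 1
  rw [← hcast']
  have hR := hR0 a r θ h0
  have hK1' := hK1 a r θ
  simp only [Zc] at hK1' ⊢
  rw [← mul_div_assoc, div_eq_div_iff (pow_ne_zero 7 hR) (pow_ne_zero 2 (pow_ne_zero 6 hR))]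
  linear_combination (-(288:ℂ) * (a:ℂ) * Complex.sin (θ:ℂ) * (m:ℂ)^2 *
    ((r:ℂ) - Complex.I*((a:ℂ)*Complex.cos (θ:ℂ)))^5 * ((rho2 a r θ : ℝ) : ℂ)^12) * hK1'

end main

section more
variable (a m r θ : ℝ)

lemma normSq_Zc : Complex.normSq (Zc a r θ) = rho2 a r θ := by
  simp [Zc, Complex.normSq_apply, Complex.mul_re, Complex.mul_im,
    Complex.cos_ofReal_re, Complex.cos_ofReal_im, rho2]
  ring

lemma normSq_V (h0 : rho2 a r θ ≠ 0) :
    (288 * (m:ℂ)^2 * Zc a r θ ^ 7 / ((rho2 a r θ : ℝ) : ℂ)^7).re ^ 2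
      + (288 * (m:ℂ)^2 * Zc a r θ ^ 7 / ((rho2 a r θ : ℝ) : ℂ)^7).im ^ 2
    = 288^2 * m^4 / rho2 a r θ ^ 7 := by
  have hV : (288 * (m:ℂ)^2 * Zc a r θ ^ 7 / ((rho2 a r θ : ℝ) : ℂ)^7)
      = ((288 * m^2 : ℝ) : ℂ) * Zc a r θ ^ 7 / ((rho2 a r θ : ℝ) : ℂ)^7 := by
    push_cast; ring
  have h1 : Complex.normSq (288 * (m:ℂ)^2 * Zc a r θ ^ 7 / ((rho2 a r θ : ℝ) : ℂ)^7)
      = (288 * m^2) * (288 * m^2) * rho2 a r θ ^ 7 / (rho2 a r θ * rho2 a r θ)^7 := by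
    rw [hV, map_div₀, map_mul, map_pow, map_pow, Complex.normSq_ofReal,
      Complex.normSq_ofReal, normSq_Zc]
  have h3 : ∀ x : ℂ, x.re^2 + x.im^2 = Complex.normSq x := fun x => by
    rw [Complex.normSq_apply]; ring
  rw [h3, h1]
  field_simp

lemma normSq_Ic (h0 : rho2 a r θ ≠ 0) :
    (Ic a m r θ).re ^ 2 + (Ic a m r θ).im ^ 2 = 2304 * m^4 / rho2 a r θ ^ 6 := by
  have hV : Ic a m r θ = ((48 * m^2 : ℝ) : ℂ) * Zc a r θ ^ 6 / ((rho2 a r θ : ℝ) : ℂ)^6 := by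
    rw [Ic_eq]; push_cast; ring
  have h1 : Complex.normSq (Ic a m r θ)
      = (48 * m^2) * (48 * m^2) * rho2 a r θ ^ 6 / (rho2 a r θ * rho2 a r θ)^6 := by
    rw [hV, map_div₀, map_mul, map_pow, map_pow, Complex.normSq_ofReal,
      Complex.normSq_ofReal, normSq_Zc]
  have h3 : ∀ x : ℂ, x.re^2 + x.im^2 = Complex.normSq x := fun x => by
    rw [Complex.normSq_apply]; ring
  rw [h3, h1]
  field_simp
  ring

end more

/-- The Abdelqader–Lake invariant `Q₂ = (1/27) (I₅I₆ − I₇²)/(I₁² + I₂²)^{5/2}`. -/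
def Q2 (a m Λ r θ : ℝ) : ℝ :=
  1 / 27 * (I5 a m Λ r θ * I6 a m Λ r θ - I7 a m Λ r θ ^ 2) /
    (I1 a m r θ ^ 2 + I2 a m r θ ^ 2) ^ ((5 : ℝ) / 2)

/-- For the Kerr–(anti-)de Sitter black hole with `m ≠ 0`, the
Abdelqader–Lake invariant `Q₂` has the stated closed form. -/
theorem Q2_closed_form (a m Λ : ℝ) (hm : m ≠ 0) (r θ : ℝ) (h : 0 < rho2 a r θ) :
    Q2 a m Λ r θ =
      -(a ^ 2 * Real.sin θ ^ 2 *
          (Λ / 3 * r ^ 4 + (a ^ 2 * Λ / 3 - 1) * r ^ 2 + 2 * m * r - a ^ 2) *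
          (1 + a ^ 2 * Λ / 3 * Real.cos θ ^ 2)) /
        (rho2 a r θ * m ^ 2) := by
  have h0 : rho2 a r θ ≠ 0 := h.ne'
  set V : ℂ := 288 * (m:ℂ)^2 * Zc a r θ ^ 7 / ((rho2 a r θ : ℝ) : ℂ)^7 with hVdef
  -- the four partial derivatives
  have d1r : deriv (fun r' => I1 a m r' θ) r = -V.re := by
    have := (hasDerivAt_re' (hDr a m r θ h0)).deriv
    simp only [I1]
    rw [this, Complex.neg_re]
  have d2r : deriv (fun r' => I2 a m r' θ) r = -V.im := by
    have := (hasDerivAt_im' (hDr a m r θ h0)).deriv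
    simp only [I2]
    rw [this, Complex.neg_im]
  have hre : (Complex.I * ((a:ℂ) * Complex.sin (θ:ℂ)) * V).re = -(a * Real.sin θ) * V.im := by
    simp [Complex.mul_re, Complex.mul_im, Complex.sin_ofReal_re, Complex.sin_ofReal_im]
  have him : (Complex.I * ((a:ℂ) * Complex.sin (θ:ℂ)) * V).im = (a * Real.sin θ) * V.re := by
    simp [Complex.mul_re, Complex.mul_im, Complex.sin_ofReal_re, Complex.sin_ofReal_im]
  have d1θ : deriv (fun θ' => I1 a m r θ') θ = -(a * Real.sin θ) * V.im := by
    have := (hasDerivAt_re' (hDθ a m r θ h0)).deriv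
    simp only [I1]
    rw [this, hre]
  have d2θ : deriv (fun θ' => I2 a m r θ') θ = (a * Real.sin θ) * V.re := by
    have := (hasDerivAt_im' (hDθ a m r θ h0)).deriv
    simp only [I2]
    rw [this, him]
  have hPQ : V.re ^ 2 + V.im ^ 2 = 288^2 * m^4 / rho2 a r θ ^ 7 := normSq_V a m r θ h0
  have key : I5 a m Λ r θ * I6 a m Λ r θ - I7 a m Λ r θ ^ 2
      = Δr a m Λ r * Δθ a Λ θ * (a^2 * Real.sin θ^2) / rho2 a r θ ^ 2
        * (V.re ^ 2 + V.im ^ 2) ^ 2 := by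
    simp only [I5, I6, I7, d1r, d2r, d1θ, d2θ]
    ring
  have hS : I1 a m r θ ^ 2 + I2 a m r θ ^ 2 = 2304 * m^4 / rho2 a r θ ^ 6 :=
    normSq_Ic a m r θ h0
  have hpos : (0:ℝ) < 48 * m^2 / rho2 a r θ ^ 3 := by positivity
  have hpow : ((2304 : ℝ) * m^4 / rho2 a r θ ^ 6) ^ ((5:ℝ)/2)
      = (48 * m^2 / rho2 a r θ ^ 3) ^ 5 := by
    have hb : (2304 : ℝ) * m^4 / rho2 a r θ ^ 6 = (48 * m^2 / rho2 a r θ ^ 3) ^ 2 := by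
      ring
    rw [hb, ← Real.rpow_natCast (48 * m^2 / rho2 a r θ ^ 3) 2,
      ← Real.rpow_natCast (48 * m^2 / rho2 a r θ ^ 3) 5, ← Real.rpow_mul hpos.le]
    norm_num
  simp only [Q2, key, hPQ, hS, hpow]
  simp only [Δr, Δθ]
  have hm2 : m^2 ≠ 0 := pow_ne_zero _ hm
  field_simp
  ring


end KerrAdS
end
end
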